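/- arXiv:1508.02988 — 2 statements merged into one kernel-verified Lean document; each statement's English description precedes it below -/
import Mathlib

section
/- Let L₁ ∈ R^{n×n} be symmetric positive definite and Γ ∈ R^{r×r} a matrix similar to a symmetric positive semidefinite matrix (i.e., Γ = Q⁻¹ M Q with M symmetric positive semidefinite). Then the Sylvester operator V ↦ L₁ V + V Γᵀ on R^{n×r} is invertible. -/
open Matrix

private lemma trace_transpose_mul_self_nonneg {p q : ℕ} (A : Matrix (Fin p) (Fin q) ℝ) :
    0 ≤ (Aᵀ * A).trace := by
  have : (Aᵀ * A).trace = ∑ j, ∑ i, A i j ^ 2 := by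
    simp [Matrix.trace, Matrix.diag, Matrix.mul_apply, sq]
  rw [this]
  positivity

theorem stmt_8 (n r : ℕ) (L1 : Matrix (Fin n) (Fin n) ℝ) (hL1 : L1.PosDef)
    (Γ Q M : Matrix (Fin r) (Fin r) ℝ) (hQ : IsUnit Q.det)
    (hM : M.PosSemidef) (hΓ : Γ = Q⁻¹ * M * Q) :
    Function.Bijective (fun V : Matrix (Fin n) (Fin r) ℝ => L1 * V + V * Γᵀ) := by
  set f : Matrix (Fin n) (Fin r) ℝ →ₗ[ℝ] Matrix (Fin n) (Fin r) ℝ :=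
    { toFun := fun V => L1 * V + V * Γᵀ
      map_add' := by
        intro U V
        simp [Matrix.mul_add, Matrix.add_mul]
        abel
      map_smul' := by
        intro c V
        simp [Matrix.mul_smul, Matrix.smul_mul, smul_add] } with hf
  have hQT : IsUnit (Qᵀ).det := by rwa [Matrix.det_transpose]
  have hMT : Mᵀ = M := by
    have := hM.1
    simpa [Matrix.IsHermitian, Matrix.conjTranspose_eq_transpose_of_trivial] using this
  have hΓT : Γᵀ = Qᵀ * M * (Qᵀ)⁻¹ := by
    rw [hΓ, Matrix.transpose_mul, Matrix.transpose_mul, hMT, Matrix.transpose_nonsing_inv,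
      Matrix.mul_assoc]
  have hinj : Function.Injective f := by
    rw [injective_iff_map_eq_zero]
    intro V hV
    simp only [hf, LinearMap.coe_mk, AddHom.coe_mk] at hV
    set W : Matrix (Fin n) (Fin r) ℝ := V * Qᵀ with hW
    -- From the Sylvester equation, L1 * W + W * M = 0
    have h1 : L1 * W + W * M = 0 := by
      have h := congrArg (fun X => X * Qᵀ) hV
      simpa [hΓT, Matrix.add_mul, Matrix.mul_assoc,
        Matrix.nonsing_inv_mul _ hQT, hW] using h
    -- trace identities
    have t1 : (Wᵀ * (L1 * W)).trace + (Wᵀ * (W * M)).trace = 0 := by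
      have h2 : Wᵀ * (L1 * W + W * M) = 0 := by rw [h1, Matrix.mul_zero]
      have := congrArg Matrix.trace h2
      simpa [Matrix.mul_add, Matrix.trace_add] using this
    -- second trace is nonneg
    have t2 : 0 ≤ (Wᵀ * (W * M)).trace := by
      obtain ⟨B, hB⟩ : ∃ B : Matrix (Fin r) (Fin r) ℝ, M = Bᴴ * B := by
        open scoped MatrixOrder in
        exact ⟨CFC.sqrt M, by
          rw [(CFC.sqrt_nonneg M).posSemidef.1.eq, CFC.sqrt_mul_sqrt_self M hM.nonneg]⟩
      have hB' : M = Bᵀ * B := by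
        rw [hB]; congr 1
      have key : (Wᵀ * (W * M)).trace = ((W * Bᵀ)ᵀ * (W * Bᵀ)).trace := by
        rw [hB']
        have e1 : Wᵀ * (W * (Bᵀ * B)) = (Wᵀ * W * Bᵀ) * B := by
          simp [Matrix.mul_assoc]
        have e2 : (W * Bᵀ)ᵀ * (W * Bᵀ) = B * (Wᵀ * W * Bᵀ) := by
          rw [Matrix.transpose_mul, Matrix.transpose_transpose]
          simp [Matrix.mul_assoc]
        rw [e1, e2, Matrix.trace_mul_comm]
      rw [key]
      exact trace_transpose_mul_self_nonneg _
    -- diagonal entries of Wᵀ * (L1 * W)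
    have diag_eq : ∀ j, (Wᵀ * (L1 * W)) j j
        = dotProduct (star (fun i => W i j)) (L1 *ᵥ fun i => W i j) := by
      intro j
      simp [Matrix.mul_apply, Matrix.mulVec, dotProduct, Finset.mul_sum]
    have diag_nonneg : ∀ j, 0 ≤ (Wᵀ * (L1 * W)) j j := by
      intro j
      rcases eq_or_ne (fun i => W i j) 0 with h | h
      · rw [diag_eq j, h]; simp
      · exact le_of_lt (by rw [diag_eq j]; exact hL1.dotProduct_mulVec_pos h)
    -- W = 0
    have hW0 : W = 0 := by
      by_contra hWne
      have hcol : ∃ j, (fun i => W i j) ≠ 0 := by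
        by_contra h
        push_neg at h
        apply hWne
        ext i j
        have := congrFun (h j) i
        simpa using this
      obtain ⟨j0, hj0⟩ := hcol
      have hpos : 0 < (Wᵀ * (L1 * W)).trace := by
        rw [Matrix.trace]
        refine Finset.sum_pos' (fun j _ => diag_nonneg j) ⟨j0, Finset.mem_univ _, ?_⟩
        show 0 < (Wᵀ * (L1 * W)) j0 j0
        rw [diag_eq j0]
        exact hL1.dotProduct_mulVec_pos hj0
      linarith
    -- conclude V = 0
    have : V = W * (Qᵀ)⁻¹ := by
      rw [hW, Matrix.mul_assoc, Matrix.mul_nonsing_inv _ hQT, Matrix.mul_one]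
    rw [this, hW0, Matrix.zero_mul]
  have : Function.Bijective f :=
    ⟨hinj, (LinearMap.injective_iff_surjective).mp hinj⟩
  exact this
end

section
/- With X = S ×₁ U₁ ⋯ ×_d U_d in Tucker format (U_μ with orthonormal columns), the subspaces V_μ = { S ×_μ δU_μ ×_{ν≠μ} U_ν : U_μᵀ δU_μ = 0 } for μ = 1,…,d and V_{d+1} = { δS ×₁ U₁ ⋯ ×_d U_d : δS arbitrary } are pairwise orthogonal with respect to the Euclidean inner product on R^{n_1 × ⋯ × n_d}. -/
open Matrix

/-- Multilinear (Tucker) product: `S ×₁ U₁ ×₂ U₂ ⋯ ×_d U_d`. -/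
noncomputable def tuckerProd {d : ℕ} {n r : Fin d → ℕ}
    (S : ((μ : Fin d) → Fin (r μ)) → ℝ)
    (U : (μ : Fin d) → Matrix (Fin (n μ)) (Fin (r μ)) ℝ) :
    ((μ : Fin d) → Fin (n μ)) → ℝ :=
  fun i => ∑ j : (μ : Fin d) → Fin (r μ), S j * ∏ μ, U μ (i μ) (j μ)

lemma tucker_inner {d : ℕ} {n r s : Fin d → ℕ}
    (S : ((μ : Fin d) → Fin (r μ)) → ℝ) (T : ((μ : Fin d) → Fin (s μ)) → ℝ)
    (A : (μ : Fin d) → Matrix (Fin (n μ)) (Fin (r μ)) ℝ)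
    (B : (μ : Fin d) → Matrix (Fin (n μ)) (Fin (s μ)) ℝ) :
    ∑ i, tuckerProd S A i * tuckerProd T B i
      = ∑ j, ∑ k, S j * T k * ∏ μ, ((A μ)ᵀ * B μ) (j μ) (k μ) := by
  unfold tuckerProd
  have expand : ∀ (j : (μ : Fin d) → Fin (r μ)) (k : (μ : Fin d) → Fin (s μ)),
      S j * T k * ∏ μ, ((A μ)ᵀ * B μ) (j μ) (k μ)
      = ∑ i : (μ : Fin d) → Fin (n μ), S j * T k * ∏ μ, (A μ (i μ) (j μ) * B μ (i μ) (k μ)) := by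
    intro j k
    rw [← Finset.mul_sum]
    congr 1
    simp only [Matrix.mul_apply, Matrix.transpose_apply]
    rw [← Fintype.piFinset_univ]
    exact Finset.prod_univ_sum (fun μ => (Finset.univ : Finset (Fin (n μ))))
      (fun μ x => A μ x (j μ) * B μ x (k μ))
  simp only [expand, Finset.sum_mul, Finset.mul_sum]
  set f : ((μ : Fin d) → Fin (n μ)) → ((μ : Fin d) → Fin (r μ)) → ((μ : Fin d) → Fin (s μ)) → ℝ :=
    fun i j k => S j * T k * ∏ μ, A μ (i μ) (j μ) * B μ (i μ) (k μ) with hf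
  have step1 : (∑ i : (μ : Fin d) → Fin (n μ), ∑ k : (μ : Fin d) → Fin (s μ),
      ∑ j : (μ : Fin d) → Fin (r μ),
      (S j * ∏ μ, A μ (i μ) (j μ)) * (T k * ∏ μ, B μ (i μ) (k μ)))
      = ∑ i, ∑ k, ∑ j, f i j k := by
    refine Finset.sum_congr rfl fun i _ => Finset.sum_congr rfl fun k _ =>
      Finset.sum_congr rfl fun j _ => ?_
    rw [hf]; dsimp only; rw [Finset.prod_mul_distrib]; ring
  rw [step1]
  calc (∑ i, ∑ k, ∑ j, f i j k)
      = ∑ i, ∑ j, ∑ k, f i j k := Finset.sum_congr rfl fun i _ => Finset.sum_comm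
    _ = ∑ j, ∑ i, ∑ k, f i j k := Finset.sum_comm
    _ = ∑ j, ∑ k, ∑ i, f i j k := Finset.sum_congr rfl fun j _ => Finset.sum_comm

theorem stmt_12 (d : ℕ) (n r : Fin d → ℕ)
    (S : ((μ : Fin d) → Fin (r μ)) → ℝ)
    (U : (μ : Fin d) → Matrix (Fin (n μ)) (Fin (r μ)) ℝ)
    (hU : ∀ μ, (U μ)ᵀ * U μ = 1) :
    (∀ μ ν : Fin d, μ ≠ ν →
      ∀ (δUμ : Matrix (Fin (n μ)) (Fin (r μ)) ℝ)
        (δUν : Matrix (Fin (n ν)) (Fin (r ν)) ℝ),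
        (U μ)ᵀ * δUμ = 0 → (U ν)ᵀ * δUν = 0 →
        ∑ i, tuckerProd S (Function.update U μ δUμ) i *
              tuckerProd S (Function.update U ν δUν) i = 0) ∧
    (∀ (μ : Fin d) (δUμ : Matrix (Fin (n μ)) (Fin (r μ)) ℝ),
        (U μ)ᵀ * δUμ = 0 →
        ∀ δS : ((μ : Fin d) → Fin (r μ)) → ℝ,
        ∑ i, tuckerProd S (Function.update U μ δUμ) i * tuckerProd δS U i = 0) := by
  constructor
  · intro μ ν hμν δUμ δUν hμ hν
    rw [tucker_inner]
    refine Finset.sum_eq_zero fun j _ => Finset.sum_eq_zero fun k _ => ?_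
    have : ((Function.update U μ δUμ ν)ᵀ * (Function.update U ν δUν ν)) (j ν) (k ν) = 0 := by
      rw [Function.update_of_ne (Ne.symm hμν), Function.update_self, hν]
      rfl
    rw [Finset.prod_eq_zero (Finset.mem_univ ν) this, mul_zero]
  · intro μ δUμ hμ δS
    rw [tucker_inner]
    refine Finset.sum_eq_zero fun j _ => Finset.sum_eq_zero fun k _ => ?_
    have : ((Function.update U μ δUμ μ)ᵀ * U μ) (j μ) (k μ) = 0 := by
      rw [Function.update_self]
      have : (δUμ)ᵀ * U μ = 0 := by
        have := congrArg Matrix.transpose hμ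
        simpa [Matrix.transpose_mul] using this
      rw [this]; rfl
    rw [Finset.prod_eq_zero (Finset.mem_univ μ) this, mul_zero]
end
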